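/- arXiv:1512.06788 — 7 statements merged into one kernel-verified Lean document; each statement's English description precedes it below -/
import Mathlib

section
/- Let M_i = (E_i, X_i, S_i, ι_i, δ_i, λ_i) for i = 1, …, n be generalized Moore machines, let E be an event alphabet, and let φ_i : E × X_1 × ⋯ × X_n → E_i be feedback maps. Define the general product machine M = Π_{i=1}^n [M_i, φ_i] with state set S = S_1 × ⋯ × S_n, initial state (ι_1, …, ι_n), output X_1 × ⋯ × X_n, output map (s_1, …, s_n) ↦ (λ_1(s_1), …, λ_n(s_n)), and transition map δ((s_1, …, s_n), e) = (δ_1(s_1, e_1), …, δ_n(s_n, e_n)) where e_i = φ_i(e, λ_1(s_1), …, λ_n(s_n)). Let f_i = M_i* and define g_i : E* → E_i* recursively by g_i(nulls) = nulls and g_i(w.e) = g_i(w).φ_i(e, f_1(g_1(w)), …, f_n(g_n(w))). Then the function F(w) = (f_1(g_1(w)), …, f_n(g_n(w))) satisfies F = M*, i.e. F(w) = M*(w) for all w ∈ E*. -/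
/-- A generalized Moore machine `(E, X, S, ι, δ, λ)`: event alphabet `E`, output set `X`,
state set `S`, initial state `init`, transition map `trans` and output map `out`. -/
structure Moore (E : Type*) (X : Type*) where
  S : Type*
  init : S
  trans : S → E → S
  out : S → X

/-- The primitive recursive extension `δ*` of the transition map:
`δ*(nulls) = ι` and `δ*(w.e) = δ(δ*(w), e)`. -/
def Moore.run {E X : Type*} (M : Moore E X) (w : List E) : M.S :=
  w.foldl M.trans M.init

/-- `M*(w) = λ(δ*(w))`. -/
def Moore.star {E X : Type*} (M : Moore E X) (w : List E) : X :=
  M.out (M.run w)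

/-- The general product `Π_{i=1}^n [M_i, φ_i]` of generalized Moore machines: state set
`S₁ × ⋯ × S_n`, initial state `(ι₁, …, ι_n)`, output map `(λ₁(s₁), …, λ_n(s_n))`, and
transition `δ((s₁,…,s_n), e) = (δ₁(s₁,e₁), …, δ_n(s_n,e_n))` where
`e_i = φ_i(e, λ₁(s₁), …, λ_n(s_n))`. -/
def prodMoore {n : ℕ} {E : Type*} {Ei Xi : Fin n → Type*}
    (M : ∀ i, Moore (Ei i) (Xi i))
    (φ : ∀ i, E → (∀ j, Xi j) → Ei i) : Moore E (∀ i, Xi i) where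
  S := ∀ i, (M i).S
  init := fun i => (M i).init
  trans := fun s e i => (M i).trans (s i) (φ i e (fun j => (M j).out (s j)))
  out := fun s i => (M i).out (s i)

/-- **The general product computes componentwise substitution.** With `f_i = M_i*` and
`g_i : E* → E_i*` defined recursively by `g_i(nulls) = nulls` and
`g_i(w.e) = g_i(w).φ_i(e, f₁(g₁(w)), …, f_n(g_n(w)))`, the function
`F(w) = (f₁(g₁(w)), …, f_n(g_n(w)))` equals `M*` for the product machine `M`. -/
theorem general_product_recursive {n : ℕ} {E : Type*} {Ei Xi : Fin n → Type*}
    (M : ∀ i, Moore (Ei i) (Xi i))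
    (φ : ∀ i, E → (∀ j, Xi j) → Ei i)
    (g : ∀ i, List E → List (Ei i))
    (hg0 : ∀ i, g i [] = [])
    (hgs : ∀ i (w : List E) (e : E),
      g i (w ++ [e]) = g i w ++ [φ i e (fun j => (M j).star (g j w))])
    (F : List E → ∀ i, Xi i)
    (hF : ∀ (w : List E) (i : Fin n), F w i = (M i).star (g i w)) :
    ∀ w : List E, F w = (prodMoore M φ).star w := by
  have key : ∀ w : List E, ∀ i, (M i).run (g i w) = (prodMoore M φ).run w i := by
    intro w
    induction w using List.reverseRecOn with
    | nil => intro i; simp [hg0, Moore.run, prodMoore]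
    | append_singleton w e ih =>
      intro i
      have : (fun j => (M j).star (g j w)) = (prodMoore M φ).out ((prodMoore M φ).run w) := by
        funext j
        simp only [Moore.star, prodMoore, ih j]
      simp only [hgs, Moore.run, List.foldl_append, List.foldl_cons, List.foldl_nil]
      simp only [Moore.run] at ih
      rw [ih i, this]
      rfl
  intro w
  funext i
  rw [hF w i]
  simp only [Moore.star, key w i, prodMoore]
end

section
/- Say a function f : E* → X is finite state if the set S_f of equivalence classes of E* under ∼_f (where w ∼_f z iff f(concat(w,u)) = f(concat(z,u)) for all u ∈ E*) is finite. Let f_i : E_i* → X_i for i = 1, …, n be finite state functions, and let φ_i : E × X_1 × ⋯ × X_n → E_i* be finite-sequence-valued feedback maps. Define g_i : E* → E_i* recursively by g_i(nulls) = nulls and g_i(w.e) = concat(g_i(w), φ_i(e, f_1(g_1(w)), …, f_n(g_n(w)))), and define Y : E* → X_1 × ⋯ × X_n by Y(w) = (f_1(g_1(w)), …, f_n(g_n(w))). Then Y is finite state. -/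
/-- The Nerode-style setoid on words: `w ∼_f z` iff `f (w ++ u) = f (z ++ u)` for all `u`. -/
def nerodeSetoid {E X : Type*} (f : List E → X) : Setoid (List E) where
  r w z := ∀ u : List E, f (w ++ u) = f (z ++ u)
  iseqv := ⟨fun _ _ => rfl, fun h u => (h u).symm, fun h₁ h₂ u => (h₁ u).trans (h₂ u)⟩

/-- `f : E* → X` is finite state if the set `S_f` of `∼_f`-equivalence classes is finite. -/
def FiniteState {E X : Type*} (f : List E → X) : Prop :=
  Finite (Quotient (nerodeSetoid f))

lemma nerode_append {E X : Type*} (f : List E → X) {a b : List E}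
    (h : (nerodeSetoid f).r a b) (v : List E) :
    (nerodeSetoid f).r (a ++ v) (b ++ v) := by
  intro u
  simpa [List.append_assoc] using h (v ++ u)

/-- **The general product of finite state variables with sequence-valued feedback is finite
state.** Given finite state `f_i : E_i* → X_i`, sequence-valued feedback maps
`φ_i : E × X₁ × ⋯ × X_n → E_i*`, and `g_i : E* → E_i*` defined recursively by
`g_i(nulls) = nulls` and `g_i(w.e) = concat(g_i(w), φ_i(e, f₁(g₁(w)), …, f_n(g_n(w))))`,
the product `Y(w) = (f₁(g₁(w)), …, f_n(g_n(w)))` is finite state. -/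
theorem general_product_finite_state {n : ℕ} {E : Type*} {Ei Xi : Fin n → Type*}
    (f : ∀ i, List (Ei i) → Xi i)
    (hfin : ∀ i, FiniteState (f i))
    (φ : ∀ i, E → (∀ j, Xi j) → List (Ei i))
    (g : ∀ i, List E → List (Ei i))
    (hg0 : ∀ i, g i [] = [])
    (hgs : ∀ i (w : List E) (e : E),
      g i (w ++ [e]) = g i w ++ φ i e (fun j => f j (g j w)))
    (Y : List E → ∀ i, Xi i)
    (hY : ∀ (w : List E) (i : Fin n), Y w i = f i (g i w)) :
    FiniteState Y := by
  -- key: if all component states agree, they keep agreeing along any suffix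
  have key : ∀ (w z : List E),
      (∀ i, (nerodeSetoid (f i)).r (g i w) (g i z)) →
      ∀ u : List E, ∀ i, (nerodeSetoid (f i)).r (g i (w ++ u)) (g i (z ++ u)) := by
    intro w z h u
    induction u using List.reverseRecOn with
    | nil => simpa using h
    | append_singleton u e ih =>
      intro i
      have hval : (fun j => f j (g j (w ++ u))) = (fun j => f j (g j (z ++ u))) := by
        funext j
        simpa using ih j []
      rw [← List.append_assoc, ← List.append_assoc, hgs, hgs, hval]
      exact nerode_append (f i) (ih i) _
  -- components determine the Y-state
  have main : ∀ (w z : List E),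
      (∀ i, (nerodeSetoid (f i)).r (g i w) (g i z)) → (nerodeSetoid Y).r w z := by
    intro w z h u
    funext i
    rw [hY, hY]
    simpa using key w z h u i []
  have : ∀ i, Finite (Quotient (nerodeSetoid (f i))) := hfin
  have hinj : Function.Injective
      (fun c : Quotient (nerodeSetoid Y) =>
        (fun i => (Quotient.mk (nerodeSetoid (f i)) (g i c.out)) :
          ∀ i, Quotient (nerodeSetoid (f i)))) := by
    intro c c' h
    have h' : ∀ i, (nerodeSetoid (f i)).r (g i c.out) (g i c'.out) := by
      intro i
      exact Quotient.exact (congrFun h i)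
    have := main c.out c'.out h'
    calc c = ⟦c.out⟧ := (Quotient.out_eq c).symm
      _ = ⟦c'.out⟧ := Quotient.sound this
      _ = c' := Quotient.out_eq c'
  exact Finite.of_injective _ hinj
end

section
/- Consider a network of nodes indexed by a set N of node names, over a network event alphabet E. For each n ∈ N let u_n : E* → E_node* be the node's event-history state variable, with initial u_n = nulls (up to the initial name marker) and, for each network event e, (after e) u_n ∈ {u_n, u_n.e' : e' ∈ E_node} (each node advances at most one step per network step). Assume the no-spurious-messages axiom: whenever (after e) u_{n} = u_{n}.rx[m] for some m ∈ Messages, there exists a node n' with (after e) u_{n'} = u_{n'}.tx and T(u_{n'}) = m ∈ Messages. Let R and S be the received-set and sent-set state variables of each node, defined recursively from its event history (R(nulls)=S(nulls)=∅; rx[m] adds m to R; tx adds T(w) to S when T(w) ∈ Messages). Then for every network history x ∈ E*, every node n₁ ∈ N, and every message m ∈ Messages: if m ∈ R(u_{n₁}(x)) then there exists n₂ ∈ N with m ∈ S(u_{n₂}(x)). -/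
/-- **Lemma 1: a received message must have been sent by some node.** Nodes `n ∈ N` have
event-history state variables `u n : E* → E_node*`, initially just the node's name marker,
advancing at most one node step per network step. Every receive event `rx m` at any node
must be simultaneous with a `tx` event at some node whose transmit variable `T` equals `m`
(no spurious messages); `tx` events need not be received. `R` and `S` are the received and
sent message sets of a node history, defined recursively (`rx m` adds `m` to `R`; `tx`
adds `T` to `S` when `T` is a message; both start empty). Then for every network history
`x`, node `n₁` and message `m`: `m ∈ R(u n₁ x)` implies `m ∈ S(u n₂ x)` for some `n₂`. -/
theorem received_implies_sent {E Enode Msg N : Type*}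
    (tx : Enode) (rx : Msg → Enode) (name : N → Enode)
    (hname_rx : ∀ (n : N) (m : Msg), name n ≠ rx m)
    (hname_tx : ∀ n : N, name n ≠ tx)
    (T : List Enode → Option Msg)
    (R S : List Enode → Set Msg)
    (hR0 : R [] = ∅) (hS0 : S [] = ∅)
    (hRrx : ∀ (w : List Enode) (m : Msg), R (w ++ [rx m]) = R w ∪ {m})
    (hRother : ∀ (w : List Enode) (e : Enode), (∀ m : Msg, e ≠ rx m) → R (w ++ [e]) = R w)
    (hStx : ∀ (w : List Enode) (m : Msg), T w = some m → S (w ++ [tx]) = S w ∪ {m})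
    (hStxnull : ∀ w : List Enode, T w = none → S (w ++ [tx]) = S w)
    (hSother : ∀ (w : List Enode) (e : Enode), e ≠ tx → S (w ++ [e]) = S w)
    (u : N → List E → List Enode)
    (hinit : ∀ n : N, u n [] = [name n])
    (hstep : ∀ (n : N) (x : List E) (e : E),
      u n (x ++ [e]) = u n x ∨ ∃ e' : Enode, u n (x ++ [e]) = u n x ++ [e'])
    (hnospur : ∀ (n : N) (x : List E) (e : E) (m : Msg),
      u n (x ++ [e]) = u n x ++ [rx m] →
      ∃ n' : N, u n' (x ++ [e]) = u n' x ++ [tx] ∧ T (u n' x) = some m) :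
    ∀ (x : List E) (n₁ : N) (m : Msg), m ∈ R (u n₁ x) → ∃ n₂ : N, m ∈ S (u n₂ x) := by
  classical
  -- S is monotone under appending any single event
  have Smono : ∀ (w : List Enode) (e : Enode), S w ⊆ S (w ++ [e]) := by
    intro w e
    by_cases he : e = tx
    · subst he
      cases hT : T w with
      | none => rw [hStxnull w hT]
      | some m' => rw [hStx w m' hT]; exact Set.subset_union_left
    · rw [hSother w e he]
  intro x
  induction x using List.reverseRecOn with
  | nil =>
    intro n₁ m hm
    exfalso
    rw [hinit n₁] at hm
    have : ([] : List Enode) ++ [name n₁] = [name n₁] := by simp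
    rw [← this, hRother [] (name n₁) (fun m' => hname_rx n₁ m'), hR0] at hm
    exact hm
  | append_singleton x e ih =>
    intro n₁ m hm
    rcases hstep n₁ x e with h | ⟨e', h⟩
    · rw [h] at hm
      obtain ⟨n₂, hn₂⟩ := ih n₁ m hm
      rcases hstep n₂ x e with h2 | ⟨e2, h2⟩
      · exact ⟨n₂, h2 ▸ hn₂⟩
      · exact ⟨n₂, h2 ▸ Smono _ _ hn₂⟩
    · rw [h] at hm
      by_cases hrx : ∃ m', e' = rx m'
      · obtain ⟨m', rfl⟩ := hrx
        rw [hRrx] at hm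
        rcases hm with hm | hm
        · -- m was already received before
          obtain ⟨n₂, hn₂⟩ := ih n₁ m hm
          rcases hstep n₂ x e with h2 | ⟨e2, h2⟩
          · exact ⟨n₂, h2 ▸ hn₂⟩
          · exact ⟨n₂, h2 ▸ Smono _ _ hn₂⟩
        · -- m = m', use no-spurious-messages
          rcases hm with rfl
          obtain ⟨n', hn', hT⟩ := hnospur n₁ x e m h
          refine ⟨n', ?_⟩
          rw [hn', hStx _ _ hT]
          exact Or.inr rfl
      · push_neg at hrx
        rw [hRother _ _ hrx] at hm
        obtain ⟨n₂, hn₂⟩ := ih n₁ m hm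
        rcases hstep n₂ x e with h2 | ⟨e2, h2⟩
        · exact ⟨n₂, h2 ▸ hn₂⟩
        · exact ⟨n₂, h2 ▸ Smono _ _ hn₂⟩
end

section
/- In the broadcast network model, suppose additionally that there is a subset D ⊆ Messages of data messages and for each d ∈ D and n ∈ N a unique acknowledgment message a_{d,n} ∈ Messages, and that every node satisfies the ack-transmit constraint: T = a_{d,n} implies d ∈ R and (Id = n or a_{d,n} ∈ R), where Id is the node's own name. Then for every network history x ∈ E*, every d ∈ D, and all nodes n, n' ∈ N: if a_{d,n'} ∈ R(u_n(x)) for some n, then a_{d,n'} ∈ S(u_{n'}(x)). -/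
/-- **Receipt of an ack `a_{d,n'}` anywhere implies node `n'` sent it.** In the broadcast
network model (nodes `u n : E* → E_node*`, at most one node step per network step, no
spurious messages, received/sent sets `R`, `S`, each node knowing its own name via `Id`),
suppose `D ⊆ Messages` are data messages with unique acknowledgments `a_{d,n}`, and every
node satisfies the ack-transmit constraint: `T = a_{d,n}` implies `d ∈ R` and
(`Id = n` or `a_{d,n} ∈ R`). Then for every network history `x`, `d ∈ D`, and nodes
`n, n'`: `a_{d,n'} ∈ R(u n x)` implies `a_{d,n'} ∈ S(u n' x)`. -/
theorem ack_received_implies_ack_sent {E Enode Msg N : Type*}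
    (tx : Enode) (rx : Msg → Enode) (name : N → Enode)
    (hname_rx : ∀ (n : N) (m : Msg), name n ≠ rx m)
    (hname_tx : ∀ n : N, name n ≠ tx)
    (T : List Enode → Option Msg)
    (R S : List Enode → Set Msg)
    (hR0 : R [] = ∅) (hS0 : S [] = ∅)
    (hRrx : ∀ (w : List Enode) (m : Msg), R (w ++ [rx m]) = R w ∪ {m})
    (hRother : ∀ (w : List Enode) (e : Enode), (∀ m : Msg, e ≠ rx m) → R (w ++ [e]) = R w)
    (hStx : ∀ (w : List Enode) (m : Msg), T w = some m → S (w ++ [tx]) = S w ∪ {m})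
    (hStxnull : ∀ w : List Enode, T w = none → S (w ++ [tx]) = S w)
    (hSother : ∀ (w : List Enode) (e : Enode), e ≠ tx → S (w ++ [e]) = S w)
    (u : N → List E → List Enode)
    (hinit : ∀ n : N, u n [] = [name n])
    (hstep : ∀ (n : N) (x : List E) (e : E),
      u n (x ++ [e]) = u n x ∨ ∃ e' : Enode, u n (x ++ [e]) = u n x ++ [e'])
    (hnospur : ∀ (n : N) (x : List E) (e : E) (m : Msg),
      u n (x ++ [e]) = u n x ++ [rx m] →
      ∃ n' : N, u n' (x ++ [e]) = u n' x ++ [tx] ∧ T (u n' x) = some m)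
    (Id : List Enode → N)
    (hId : ∀ (n : N) (x : List E), Id (u n x) = n)
    (D : Set Msg) (ack : Msg → N → Msg)
    (hack_inj : ∀ (d₁ : Msg) (n₁ : N) (d₂ : Msg) (n₂ : N),
      ack d₁ n₁ = ack d₂ n₂ → d₁ = d₂ ∧ n₁ = n₂)
    (hackT : ∀ (n : N) (x : List E) (d : Msg) (n' : N), d ∈ D →
      T (u n x) = some (ack d n') →
      d ∈ R (u n x) ∧ (Id (u n x) = n' ∨ ack d n' ∈ R (u n x))) :
    ∀ (x : List E) (d : Msg) (n n' : N), d ∈ D →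
      ack d n' ∈ R (u n x) → ack d n' ∈ S (u n' x) := by
  -- S is monotone along network steps
  have Smono : ∀ (n : N) (x : List E) (e : E), S (u n x) ⊆ S (u n (x ++ [e])) := by
    intro n x e
    rcases hstep n x e with h | ⟨e', h⟩
    · rw [h]
    · rw [h]
      by_cases he : e' = tx
      · subst he
        cases hT : T (u n x) with
        | none => rw [hStxnull _ hT]
        | some m => rw [hStx _ _ hT]; exact Set.subset_union_left
      · rw [hSother _ _ he]
  intro x
  induction x using List.reverseRecOn with
  | nil =>
    intro d n n' _ hr
    rw [hinit] at hr
    have : R ([] ++ [name n]) = R [] := hRother [] (name n) (fun m => hname_rx n m)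
    simp only [List.nil_append] at this
    rw [this, hR0] at hr
    exact absurd hr (Set.notMem_empty _)
  | append_singleton x e ih =>
    intro d n n' hd hr
    rcases hstep n x e with h | ⟨e', h⟩
    · rw [h] at hr
      exact Smono n' x e (ih d n n' hd hr)
    · rw [h] at hr
      rcases Classical.em (∃ m : Msg, e' = rx m) with ⟨m, rfl⟩ | hne
      · rw [hRrx] at hr
        rcases hr with hr | hr
        · exact Smono n' x e (ih d n n' hd hr)
        · -- hr : ack d n' = m (hr : ack d n' ∈ {m})
          have hm : m = ack d n' := hr.symm
          subst hm
          obtain ⟨n'', hu, hT⟩ := hnospur n x e _ h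
          obtain ⟨_, hcase⟩ := hackT n'' x d n' hd hT
          rw [hId] at hcase
          rcases hcase with rfl | hin
          · rw [hu, hStx _ _ hT]
            exact Set.mem_union_right _ rfl
          · exact Smono n' x e (ih d n'' n' hd hin)
      · push_neg at hne
        rw [hRother _ _ (fun m => hne m)] at hr
        exact Smono n' x e (ih d n n' hd hr)
end

section
/- In the broadcast network model with data messages D ⊆ Messages and unique acknowledgments a_{d,n} for d ∈ D and n ∈ N, assume every node satisfies the ack-transmit constraint: T = a_{d,n} implies d ∈ R and (Id = n or a_{d,n} ∈ R). Then for every network history x ∈ E*, every d ∈ D, and all nodes n, n' ∈ N: if a_{d,n'} ∈ R(u_n(x)) then d ∈ R(u_{n'}(x)). -/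
/-- **Lemma 2: receipt of an acknowledgment `a_{d,n'}` anywhere implies node `n'` received
`d`.** In the broadcast network model (nodes `u n : E* → E_node*`, at most one node step
per network step, no spurious messages, received/sent sets `R`, `S`, each node knowing its
own name via `Id`), suppose `D ⊆ Messages` are data messages with unique acknowledgments
`a_{d,n}`, and every node satisfies the ack-transmit constraint: `T = a_{d,n}` implies
`d ∈ R` and (`Id = n` or `a_{d,n} ∈ R`). Then for every network history `x`, `d ∈ D`, and
nodes `n, n'`: `a_{d,n'} ∈ R(u n x)` implies `d ∈ R(u n' x)`. -/
theorem ack_received_implies_data_received {E Enode Msg N : Type*}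
    (tx : Enode) (rx : Msg → Enode) (name : N → Enode)
    (hname_rx : ∀ (n : N) (m : Msg), name n ≠ rx m)
    (hname_tx : ∀ n : N, name n ≠ tx)
    (T : List Enode → Option Msg)
    (R S : List Enode → Set Msg)
    (hR0 : R [] = ∅) (hS0 : S [] = ∅)
    (hRrx : ∀ (w : List Enode) (m : Msg), R (w ++ [rx m]) = R w ∪ {m})
    (hRother : ∀ (w : List Enode) (e : Enode), (∀ m : Msg, e ≠ rx m) → R (w ++ [e]) = R w)
    (hStx : ∀ (w : List Enode) (m : Msg), T w = some m → S (w ++ [tx]) = S w ∪ {m})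
    (hStxnull : ∀ w : List Enode, T w = none → S (w ++ [tx]) = S w)
    (hSother : ∀ (w : List Enode) (e : Enode), e ≠ tx → S (w ++ [e]) = S w)
    (u : N → List E → List Enode)
    (hinit : ∀ n : N, u n [] = [name n])
    (hstep : ∀ (n : N) (x : List E) (e : E),
      u n (x ++ [e]) = u n x ∨ ∃ e' : Enode, u n (x ++ [e]) = u n x ++ [e'])
    (hnospur : ∀ (n : N) (x : List E) (e : E) (m : Msg),
      u n (x ++ [e]) = u n x ++ [rx m] →
      ∃ n' : N, u n' (x ++ [e]) = u n' x ++ [tx] ∧ T (u n' x) = some m)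
    (Id : List Enode → N)
    (hId : ∀ (n : N) (x : List E), Id (u n x) = n)
    (D : Set Msg) (ack : Msg → N → Msg)
    (hack_inj : ∀ (d₁ : Msg) (n₁ : N) (d₂ : Msg) (n₂ : N),
      ack d₁ n₁ = ack d₂ n₂ → d₁ = d₂ ∧ n₁ = n₂)
    (hackT : ∀ (n : N) (x : List E) (d : Msg) (n' : N), d ∈ D →
      T (u n x) = some (ack d n') →
      d ∈ R (u n x) ∧ (Id (u n x) = n' ∨ ack d n' ∈ R (u n x))) :
    ∀ (x : List E) (d : Msg) (n n' : N), d ∈ D →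
      ack d n' ∈ R (u n x) → d ∈ R (u n' x) := by

  have mono : ∀ (w : List Enode) (e : Enode), R w ⊆ R (w ++ [e]) := by
    intro w e
    by_cases h : ∃ m : Msg, e = rx m
    · obtain ⟨m, rfl⟩ := h
      rw [hRrx]; exact Set.subset_union_left
    · rw [hRother w e (fun m hm => h ⟨m, hm⟩)]
  have umono : ∀ (n : N) (x : List E) (e : E), R (u n x) ⊆ R (u n (x ++ [e])) := by
    intro n x e
    rcases hstep n x e with h | ⟨e', h⟩
    · rw [h]
    · rw [h]; exact mono _ _
  intro x
  induction x using List.reverseRecOn with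
  | nil =>
    intro d n n' _ hmem
    rw [hinit] at hmem
    have : R ([] ++ [name n]) = R [] := hRother [] (name n) (hname_rx n)
    simp at this
    rw [this, hR0] at hmem
    exact absurd hmem (Set.notMem_empty _)
  | append_singleton x e ih =>
    intro d n n' hd hmem
    rcases hstep n x e with h | ⟨e', h⟩
    · rw [h] at hmem
      exact umono n' x e (ih d n n' hd hmem)
    · rw [h] at hmem
      by_cases hr : ∃ m : Msg, e' = rx m
      · obtain ⟨m, rfl⟩ := hr
        rw [hRrx] at hmem
        rcases hmem with hmem | hmem
        · exact umono n' x e (ih d n n' hd hmem)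
        · -- m = ack d n'
          have hm : m = ack d n' := (Set.mem_singleton_iff.mp hmem).symm
          subst hm
          obtain ⟨n'', _, hT⟩ := hnospur n x e _ h
          obtain ⟨hdR, hor⟩ := hackT n'' x d n' hd hT
          rcases hor with hid | hack
          · rw [hId] at hid
            subst hid
            exact umono n'' x e hdR
          · exact umono n' x e (ih d n'' n' hd hack)
      · rw [hRother _ e' (fun m hm => hr ⟨m, hm⟩)] at hmem
        exact umono n' x e (ih d n n' hd hmem)
end

section
/- In the broadcast network model with data messages D ⊆ Messages and unique acknowledgments a_{d,n} for d ∈ D and n ∈ N, assume every node satisfies the ack-transmit constraint: T = a_{d,n} implies d ∈ R and (Id = n or a_{d,n} ∈ R). Fix a group G ⊆ N and define for each node the boolean state variable Commit(G, d) = 1 if and only if a_{d,n} ∈ R for all n ∈ G. Then for every network history x ∈ E*, every node n ∈ N, and every d ∈ D: if Commit(G, d) holds at node n (i.e., a_{d,n'} ∈ R(u_n(x)) for all n' ∈ G), then every node n' ∈ G has received d, i.e., d ∈ R(u_{n'}(x)) for all n' ∈ G. -/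
/-- **Commit correctness.** In the broadcast network model (nodes `u n : E* → E_node*`, at
most one node step per network step, no spurious messages, received/sent sets `R`, `S`,
each node knowing its own name via `Id`), with data messages `D ⊆ Messages`, unique
acknowledgments `a_{d,n}`, and the ack-transmit constraint (`T = a_{d,n}` implies `d ∈ R`
and (`Id = n` or `a_{d,n} ∈ R`)): fix a group `G ⊆ N` and say `Commit(G,d)` holds at a
node iff `a_{d,n'} ∈ R` for all `n' ∈ G`. Then for every network history `x`, node `n`,
and `d ∈ D`: if `Commit(G,d)` holds at node `n`, then every `n' ∈ G` has received `d`,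
i.e. `d ∈ R(u n' x)` for all `n' ∈ G`. -/
theorem commit_implies_group_received {E Enode Msg N : Type*}
    (tx : Enode) (rx : Msg → Enode) (name : N → Enode)
    (hname_rx : ∀ (n : N) (m : Msg), name n ≠ rx m)
    (hname_tx : ∀ n : N, name n ≠ tx)
    (T : List Enode → Option Msg)
    (R S : List Enode → Set Msg)
    (hR0 : R [] = ∅) (hS0 : S [] = ∅)
    (hRrx : ∀ (w : List Enode) (m : Msg), R (w ++ [rx m]) = R w ∪ {m})
    (hRother : ∀ (w : List Enode) (e : Enode), (∀ m : Msg, e ≠ rx m) → R (w ++ [e]) = R w)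
    (hStx : ∀ (w : List Enode) (m : Msg), T w = some m → S (w ++ [tx]) = S w ∪ {m})
    (hStxnull : ∀ w : List Enode, T w = none → S (w ++ [tx]) = S w)
    (hSother : ∀ (w : List Enode) (e : Enode), e ≠ tx → S (w ++ [e]) = S w)
    (u : N → List E → List Enode)
    (hinit : ∀ n : N, u n [] = [name n])
    (hstep : ∀ (n : N) (x : List E) (e : E),
      u n (x ++ [e]) = u n x ∨ ∃ e' : Enode, u n (x ++ [e]) = u n x ++ [e'])
    (hnospur : ∀ (n : N) (x : List E) (e : E) (m : Msg),
      u n (x ++ [e]) = u n x ++ [rx m] →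
      ∃ n' : N, u n' (x ++ [e]) = u n' x ++ [tx] ∧ T (u n' x) = some m)
    (Id : List Enode → N)
    (hId : ∀ (n : N) (x : List E), Id (u n x) = n)
    (D : Set Msg) (ack : Msg → N → Msg)
    (hack_inj : ∀ (d₁ : Msg) (n₁ : N) (d₂ : Msg) (n₂ : N),
      ack d₁ n₁ = ack d₂ n₂ → d₁ = d₂ ∧ n₁ = n₂)
    (hackT : ∀ (n : N) (x : List E) (d : Msg) (n' : N), d ∈ D →
      T (u n x) = some (ack d n') →
      d ∈ R (u n x) ∧ (Id (u n x) = n' ∨ ack d n' ∈ R (u n x))) :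
    ∀ (G : Set N) (x : List E) (n : N) (d : Msg), d ∈ D →
      (∀ n' ∈ G, ack d n' ∈ R (u n x)) → ∀ n' ∈ G, d ∈ R (u n' x) := by
  have hmono : ∀ (x : List E) (e : E) (n : N), R (u n x) ⊆ R (u n (x ++ [e])) := by
    intro x e n
    rcases hstep n x e with h | ⟨e', h⟩
    · rw [h]
    · rw [h]
      by_cases hm : ∃ m, e' = rx m
      · obtain ⟨m, rfl⟩ := hm
        rw [hRrx]; exact Set.subset_union_left
      · push_neg at hm
        rw [hRother _ _ hm]
  have key : ∀ (x : List E) (d : Msg), d ∈ D → ∀ (n n' : N),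
      ack d n' ∈ R (u n x) → d ∈ R (u n' x) := by
    intro x
    induction x using List.reverseRecOn with
    | nil =>
      intro d hd n n' hmem
      rw [hinit] at hmem
      have h1 : R [name n] = R ([] ++ [name n]) := by simp
      rw [h1, hRother _ _ (fun m => hname_rx n m), hR0] at hmem
      exact absurd hmem (Set.notMem_empty _)
    | append_singleton x e ih =>
      intro d hd n n' hmem
      rcases hstep n x e with h | ⟨e', h⟩
      · rw [h] at hmem
        exact hmono x e n' (ih d hd n n' hmem)
      · rw [h] at hmem
        by_cases hm : ∃ m, e' = rx m
        · obtain ⟨m, rfl⟩ := hm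
          rw [hRrx] at hmem
          rcases hmem with hmem | hmem
          · exact hmono x e n' (ih d hd n n' hmem)
          · have hm' : m = ack d n' := hmem.symm
            subst hm'
            obtain ⟨n₀, hn₀, hT⟩ := hnospur n x e (ack d n') h
            obtain ⟨hdR, hcase⟩ := hackT n₀ x d n' hd hT
            rcases hcase with hid | hack
            · rw [hId] at hid
              rw [← hid]
              exact hmono x e n₀ hdR
            · exact hmono x e n' (ih d hd n₀ n' hack)
        · push_neg at hm
          rw [hRother _ _ hm] at hmem
          exact hmono x e n' (ih d hd n n' hmem)
  intro G x n d hd hcommit n' hn'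
  exact key x d hd n n' (hcommit n' hn')
end

section
/- In the broadcast network model, consider the cyclic-acknowledgment protocol for a group G ⊆ N with |G| = k and a surjection π : {0, …, k−1} → G. Messages carry sequence numbers: data message d_i and acknowledgment a_i share sequence number i. Assume: (1) sequence numbers uniquely identify sent data messages: if d_i ∈ S(u_{n₁}(x)) and d'_i ∈ S(u_{n₂}(x)) then d'_i = d_i; (2) a node transmits an ack a_i only if π(i mod k) = Id or a_i ∈ R; (3) a node transmits a_i only if d_i ∈ R and for all j < i there exist a_j, d_j with a_j ∈ R and d_j ∈ R. Then for every network history x ∈ E* and every node n: if a_{i+k} ∈ R(u_n(x)), then there is a complete cycle of nodes in G that have received d_i; in particular every node n' ∈ G satisfies d_i ∈ R(u_{n'}(x)). -/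
/-- **Cyclic-acknowledgment protocol.** In the broadcast network model (nodes
`u n : E* → E_node*`, at most one node step per network step, no spurious messages,
received/sent sets `R`, `S`, each node knowing its own name via `Id`), fix a group
`G ⊆ N` with `|G| = k > 0` and a surjection `π : {0,…,k−1} → G`. Data messages (`d ∈ D`,
with sequence number `num d`) and acknowledgments (`a i`, with sequence number `i`) carry
sequence numbers. Assume: (1) sequence numbers uniquely identify sent data messages;
(2) a node transmits `a i` only if `π(i mod k) = Id` or `a i ∈ R`; (3) a node transmits
`a i` only if some data message numbered `i` is in `R` and, for every `j < i`, `a j ∈ R`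
and some data message numbered `j` is in `R`. Then for every network history `x` and node
`n`: if `a (i+k) ∈ R(u n x)` then there is a complete cycle of nodes in `G` that received
the data message `d_i` numbered `i`; in particular every `n' ∈ G` has `d_i ∈ R(u n' x)`. -/
theorem cyclic_ack_protocol {E Enode Msg N : Type*}
    (tx : Enode) (rx : Msg → Enode) (name : N → Enode)
    (hname_rx : ∀ (n : N) (m : Msg), name n ≠ rx m)
    (hname_tx : ∀ n : N, name n ≠ tx)
    (T : List Enode → Option Msg)
    (R S : List Enode → Set Msg)
    (hR0 : R [] = ∅) (hS0 : S [] = ∅)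
    (hRrx : ∀ (w : List Enode) (m : Msg), R (w ++ [rx m]) = R w ∪ {m})
    (hRother : ∀ (w : List Enode) (e : Enode), (∀ m : Msg, e ≠ rx m) → R (w ++ [e]) = R w)
    (hStx : ∀ (w : List Enode) (m : Msg), T w = some m → S (w ++ [tx]) = S w ∪ {m})
    (hStxnull : ∀ w : List Enode, T w = none → S (w ++ [tx]) = S w)
    (hSother : ∀ (w : List Enode) (e : Enode), e ≠ tx → S (w ++ [e]) = S w)
    (u : N → List E → List Enode)
    (hinit : ∀ n : N, u n [] = [name n])
    (hstep : ∀ (n : N) (x : List E) (e : E),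
      u n (x ++ [e]) = u n x ∨ ∃ e' : Enode, u n (x ++ [e]) = u n x ++ [e'])
    (hnospur : ∀ (n : N) (x : List E) (e : E) (m : Msg),
      u n (x ++ [e]) = u n x ++ [rx m] →
      ∃ n' : N, u n' (x ++ [e]) = u n' x ++ [tx] ∧ T (u n' x) = some m)
    (Id : List Enode → N)
    (hId : ∀ (n : N) (x : List E), Id (u n x) = n)
    -- the group, its size, and the cyclic turn assignment
    (G : Finset N) (k : ℕ) (hk : G.card = k) (hkpos : 0 < k)
    (π : Fin k → N)
    (hπmem : ∀ j : Fin k, π j ∈ G)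
    (hπsurj : ∀ n ∈ G, ∃ j : Fin k, π j = n)
    -- data messages `D` with sequence numbers `num`, and acks `a i` with sequence number `i`
    (D : Set Msg) (num : Msg → ℕ) (a : ℕ → Msg)
    -- (1) sequence numbers of sent data messages are uniquely identifying
    (huniq : ∀ (x : List E) (n₁ n₂ : N) (d d' : Msg), d ∈ D → d' ∈ D → num d = num d' →
      d ∈ S (u n₁ x) → d' ∈ S (u n₂ x) → d' = d)
    -- (2) a node transmits an ack `a i` only if it is its turn or it is resending
    (hturn : ∀ (n : N) (x : List E) (i : ℕ), T (u n x) = some (a i) →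
      π ⟨i % k, Nat.mod_lt i hkpos⟩ = Id (u n x) ∨ a i ∈ R (u n x))
    -- (3) acks are only sent if all previous data messages and acks have been received
    (hall : ∀ (n : N) (x : List E) (i : ℕ), T (u n x) = some (a i) →
      (∃ d ∈ D, num d = i ∧ d ∈ R (u n x)) ∧
      ∀ j < i, a j ∈ R (u n x) ∧ ∃ d ∈ D, num d = j ∧ d ∈ R (u n x)) :
    ∀ (x : List E) (n : N) (i : ℕ), a (i + k) ∈ R (u n x) →
      ∃ d ∈ D, num d = i ∧ ∀ n' ∈ G, d ∈ R (u n' x) := by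
  classical
  -- single-step monotonicity of R and S
  have hRstep : ∀ (n : N) (x : List E) (e : E), R (u n x) ⊆ R (u n (x ++ [e])) := by
    intro n x e m hm
    rcases hstep n x e with h | ⟨e', h⟩
    · rw [h]; exact hm
    · rw [h]
      by_cases he : ∃ m', e' = rx m'
      · obtain ⟨m', rfl⟩ := he
        rw [hRrx]; exact Or.inl hm
      · push_neg at he
        rw [hRother _ _ he]; exact hm
  have hSstep : ∀ (n : N) (x : List E) (e : E), S (u n x) ⊆ S (u n (x ++ [e])) := by
    intro n x e m hm
    rcases hstep n x e with h | ⟨e', h⟩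
    · rw [h]; exact hm
    · rw [h]
      by_cases he : e' = tx
      · subst he
        rcases hT' : T (u n x) with _ | m'
        · rw [hStxnull _ hT']; exact hm
        · rw [hStx _ _ hT']; exact Or.inl hm
      · rw [hSother _ _ he]; exact hm
  -- prefix monotonicity
  have hRmono : ∀ (n : N) (x y : List E), x <+: y → R (u n x) ⊆ R (u n y) := by
    intro n x y hxy
    obtain ⟨t, rfl⟩ := hxy
    induction t using List.reverseRecOn with
    | nil => simp
    | append_singleton t e ih =>
      rw [← List.append_assoc]
      exact ih.trans (hRstep n (x ++ t) e)
  have hSmono : ∀ (n : N) (x y : List E), x <+: y → S (u n x) ⊆ S (u n y) := by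
    intro n x y hxy
    obtain ⟨t, rfl⟩ := hxy
    induction t using List.reverseRecOn with
    | nil => simp
    | append_singleton t e ih =>
      rw [← List.append_assoc]
      exact ih.trans (hSstep n (x ++ t) e)
  -- key lemma: a received message was sent by some node, and was queued for
  -- transmission at a strictly earlier prefix of the history
  have key : ∀ (x : List E) (n : N) (m : Msg), m ∈ R (u n x) →
      (∃ n', m ∈ S (u n' x)) ∧
      (∃ (n' : N) (x' : List E), x' <+: x ∧ x'.length < x.length ∧ T (u n' x') = some m) := by
    intro x
    induction x using List.reverseRecOn with
    | nil =>
      intro n m hm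
      rw [hinit n, show ([name n] : List Enode) = [] ++ [name n] from rfl,
        hRother [] (name n) (fun m' => hname_rx n m'), hR0] at hm
      exact hm.elim
    | append_singleton x e ih =>
      intro n m hm
      have lift : m ∈ R (u n x) →
          (∃ n', m ∈ S (u n' (x ++ [e]))) ∧
          (∃ (n' : N) (x' : List E), x' <+: (x ++ [e]) ∧ x'.length < (x ++ [e]).length ∧
            T (u n' x') = some m) := by
        intro hm'
        obtain ⟨⟨n₁, hs⟩, ⟨n₂, x', hpre, hlen, hT'⟩⟩ := ih n m hm'
        refine ⟨⟨n₁, hSstep _ _ _ hs⟩, ⟨n₂, x', hpre.trans (List.prefix_append x [e]), ?_, hT'⟩⟩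
        simp only [List.length_append, List.length_singleton]
        omega
      rcases hstep n x e with h | ⟨e', h⟩
      · rw [h] at hm; exact lift hm
      · by_cases he : ∃ m', e' = rx m'
        · obtain ⟨m', rfl⟩ := he
          rw [h, hRrx] at hm
          rcases hm with hm | hm
          · exact lift hm
          · have hmm : m = m' := hm
            subst hmm
            obtain ⟨n', hu, hT'⟩ := hnospur n x e m h
            refine ⟨⟨n', ?_⟩, ⟨n', x, List.prefix_append x [e], by simp, hT'⟩⟩
            rw [hu, hStx _ _ hT']
            exact Or.inr rfl
        · push_neg at he
          rw [h, hRother _ _ he] at hm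
          exact lift hm
  -- original sender: any received ack was (at some prefix) queued by the node
  -- whose turn it is according to π
  have orig : ∀ (L : ℕ) (x : List E), x.length ≤ L → ∀ (j : ℕ) (n : N), a j ∈ R (u n x) →
      ∃ (n' : N) (x' : List E), x' <+: x ∧ T (u n' x') = some (a j) ∧
        π ⟨j % k, Nat.mod_lt j hkpos⟩ = n' := by
    intro L
    induction L with
    | zero =>
      intro x hx j n hm
      obtain ⟨-, n₂, x', hpre, hlen, hT'⟩ := key x n (a j) hm
      omega
    | succ L ih =>
      intro x hx j n hm
      obtain ⟨-, n₂, x', hpre, hlen, hT'⟩ := key x n (a j) hm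
      rcases hturn n₂ x' j hT' with hp | hres
      · exact ⟨n₂, x', hpre, hT', by rw [hp, hId]⟩
      · obtain ⟨n', x'', hp2, hT2, hπ2⟩ := ih x' (by omega) j n₂ hres
        exact ⟨n', x'', hp2.trans hpre, hT2, hπ2⟩
  -- main argument
  intro x n i hm
  obtain ⟨-, n₁, x₁, hpre₁, -, hT₁⟩ := key x n (a (i + k)) hm
  obtain ⟨-, hall₁⟩ := hall n₁ x₁ (i + k) hT₁
  have main : ∀ n' ∈ G, ∃ d ∈ D, num d = i ∧ d ∈ R (u n' x) := by
    intro n' hn'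
    obtain ⟨j, hj⟩ := hπsurj n' hn'
    have hik : i % k < k := Nat.mod_lt i hkpos
    set t := (j.val + k - i % k) % k with ht
    have htk : t < k := Nat.mod_lt _ hkpos
    have htmod : (i % k + t) % k = j.val := by
      rcases le_or_gt (i % k) j.val with h | h
      · have het : t = j.val - i % k := by
          rw [ht, show j.val + k - i % k = (j.val - i % k) + k by omega, Nat.add_mod_right]
          exact Nat.mod_eq_of_lt (by omega)
        rw [het, show i % k + (j.val - i % k) = j.val by omega]
        exact Nat.mod_eq_of_lt j.isLt
      · have het : t = j.val + k - i % k := Nat.mod_eq_of_lt (by omega)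
        rw [het, show i % k + (j.val + k - i % k) = j.val + k by omega, Nat.add_mod_right]
        exact Nat.mod_eq_of_lt j.isLt
    set J := i + t with hJ
    have hJmod : J % k = j.val := by
      rw [hJ, Nat.add_mod, Nat.mod_eq_of_lt htk]
      exact htmod
    have haJ : a J ∈ R (u n₁ x₁) := (hall₁ J (by omega)).1
    obtain ⟨n₂, x₂, hpre₂, hT₂, hπ₂⟩ := orig x₁.length x₁ le_rfl J n₁ haJ
    have hn₂ : n₂ = n' := by
      rw [← hπ₂, ← hj]
      exact congrArg π (Fin.ext hJmod)
    obtain ⟨hfirst, hprev⟩ := hall n₂ x₂ J hT₂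
    have hdi : ∃ d ∈ D, num d = i ∧ d ∈ R (u n₂ x₂) := by
      rcases Nat.eq_or_lt_of_le (show i ≤ J by omega) with hEq | hLt
      · rw [hEq]; exact hfirst
      · exact (hprev i hLt).2
    obtain ⟨d, hdD, hdnum, hdR⟩ := hdi
    refine ⟨d, hdD, hdnum, ?_⟩
    rw [← hn₂]
    exact hRmono n₂ x₂ x (hpre₂.trans hpre₁) hdR
  have hn₀ : π ⟨0, hkpos⟩ ∈ G := hπmem _
  obtain ⟨d₀, hd₀D, hd₀num, hd₀R⟩ := main _ hn₀
  refine ⟨d₀, hd₀D, hd₀num, ?_⟩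
  intro n' hn'
  obtain ⟨d', hD', hnum', hR'⟩ := main n' hn'
  obtain ⟨m₀, hs₀⟩ := (key x _ d₀ hd₀R).1
  obtain ⟨m', hs'⟩ := (key x n' d' hR').1
  have : d' = d₀ := huniq x m₀ m' d₀ d' hd₀D hD' (hd₀num.trans hnum'.symm) hs₀ hs'
  rwa [this] at hR'
end
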